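/- Let A and X be n×n complex matrices and 1 ≤ m ≤ n. Then D^m per(A)(X,…,X) = m! · Σ_{I,J∈Q_{m,n}} per A(I|J) · per X[I|J]. -/

import Mathlib

open scoped Classical

noncomputable section

open scoped Matrix.Norms.L2Operator

/-- The permanent of a square complex matrix:
`per A = Σ_σ a_{1σ(1)} ⋯ a_{nσ(n)}`. -/
def perm {k : ℕ} (A : Matrix (Fin k) (Fin k) ℂ) : ℂ :=
  ∑ σ : Equiv.Perm (Fin k), ∏ i, A i (σ i)

/-- `A(J; X¹,…,Xᵐ)` : the matrix obtained from `A` by replacing, for each `p`,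
column `J p` of `A` by column `J p` of `X p`, keeping all other columns unchanged. -/
def replCols {n m : ℕ} (A : Matrix (Fin n) (Fin n) ℂ) (J : Fin m → Fin n)
    (X : Fin m → Matrix (Fin n) (Fin n) ℂ) : Matrix (Fin n) (Fin n) ℂ :=
  Matrix.of fun i j => if h : ∃ p, J p = j then X h.choose i j else A i j

/-- The strictly increasing enumeration of the complement of the range of an
injective tuple `I : Fin m → Fin n`; used to form `A(I|J)`, the submatrix of `A`
obtained by deleting rows `I` and columns `J`. -/
def delTuple {n m : ℕ} (I : Fin m → Fin n) (hI : Function.Injective I) : Fin (n - m) → Fin n :=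
  (Finset.univ.image I)ᶜ.orderEmbOfFin
    (by simp [Finset.card_compl, Finset.card_image_of_injective _ hI])

lemma delTuple_strictMono {n m : ℕ} (I : Fin m → Fin n) (hI : Function.Injective I) :
    StrictMono (delTuple I hI) := (Finset.orderEmbOfFin _ _).strictMono

lemma range_delTuple {n m : ℕ} (I : Fin m → Fin n) (hI : Function.Injective I) :
    Set.range (delTuple I hI) = (Set.range I)ᶜ := by
  unfold delTuple
  rw [Finset.range_orderEmbOfFin]
  simp

lemma sumElim_bijective {n m : ℕ} (hmn : m ≤ n) (I : Fin m → Fin n) (hI : Function.Injective I) :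
    Function.Bijective (Sum.elim I (delTuple I hI)) := by
  rw [Fintype.bijective_iff_injective_and_card]
  constructor
  · refine Function.Injective.sumElim hI (delTuple_strictMono I hI).injective ?_
    intro a b hab
    have h1 : delTuple I hI b ∈ (Set.range I)ᶜ := by
      rw [← range_delTuple I hI]; exact Set.mem_range_self _
    exact h1 (hab ▸ Set.mem_range_self a)
  · simp [Nat.add_sub_cancel' hmn]


lemma laplace {n m : ℕ} (hmn : m ≤ n) (I : Fin m → Fin n) (hI : StrictMono I)
    (M : Matrix (Fin n) (Fin n) ℂ) :
    ∑ σ : Equiv.Perm (Fin n), ∏ i, M i (σ i) =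
      ∑ J : {J : Fin m → Fin n // StrictMono J},
        (∑ ρ : Equiv.Perm (Fin m), ∏ r, M (I r) (J.1 (ρ r))) *
        (∑ τ : Equiv.Perm (Fin (n - m)),
          ∏ k, M (delTuple I hI.injective k) (delTuple J.1 J.2.injective (τ k))) := by
  set eI : (Fin m ⊕ Fin (n - m)) ≃ Fin n :=
    Equiv.ofBijective _ (sumElim_bijective hmn I hI.injective) with heI
  set eJ : {J : Fin m → Fin n // StrictMono J} → ((Fin m ⊕ Fin (n - m)) ≃ Fin n) :=
    fun J => Equiv.ofBijective _ (sumElim_bijective hmn J.1 J.2.injective) with heJ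
  set Φ : ({J : Fin m → Fin n // StrictMono J} × (Equiv.Perm (Fin m) × Equiv.Perm (Fin (n - m))))
      → Equiv.Perm (Fin n) :=
    fun p => eI.symm.trans ((Equiv.sumCongr p.2.1 p.2.2).trans (eJ p.1)) with hΦ
  have heIl : ∀ r, eI (Sum.inl r) = I r := fun r => rfl
  have heIr : ∀ k, eI (Sum.inr k) = delTuple I hI.injective k := fun k => rfl
  have heJl : ∀ J r, eJ J (Sum.inl r) = J.1 r := fun J r => rfl
  have heJr : ∀ J k, eJ J (Sum.inr k) = delTuple J.1 J.2.injective k := fun J k => rfl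
  have hΦI : ∀ p r, Φ p (I r) = p.1.1 (p.2.1 r) := by
    intro p r
    have h1 : eI.symm (I r) = Sum.inl r := by rw [Equiv.symm_apply_eq]; rfl
    simp [hΦ, h1]
    rfl
  have hΦd : ∀ p k, Φ p (delTuple I hI.injective k) = delTuple p.1.1 p.1.2.injective (p.2.2 k) := by
    intro p k
    have h1 : eI.symm (delTuple I hI.injective k) = Sum.inr k := by rw [Equiv.symm_apply_eq]; rfl
    simp [hΦ, h1]
    rfl
  have hbij : Function.Bijective Φ := by
    constructor
    · rintro p q h
      have hr : p.1 = q.1 := by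
        have h2 : ∀ p', Set.range (fun r => Φ p' (I r)) = Set.range p'.1.1 := by
          intro p'
          simp only [hΦI]
          exact Function.Surjective.range_comp p'.2.1.surjective p'.1.1
        have h1 : Set.range p.1.1 = Set.range q.1.1 := by rw [← h2 p, ← h2 q, h]
        have hwf : WellFoundedLT (Fin m) := inferInstance
        exact Subtype.ext ((@StrictMono.range_inj (Fin m) (Fin n) _ _ hwf _ _ p.1.2 q.1.2).mp h1)
      have hc : Equiv.sumCongr p.2.1 p.2.2 = Equiv.sumCongr q.2.1 q.2.2 := by
        refine Equiv.ext fun x => ?_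
        have h' := DFunLike.congr_fun h (eI x)
        simp only [hΦ, Equiv.trans_apply, Equiv.symm_apply_apply] at h'
        rw [hr] at h'
        exact (eJ q.1).injective h'
      have hpq : (p.2.1, p.2.2) = (q.2.1, q.2.2) :=
        Equiv.Perm.sumCongrHom_injective (by simpa [Equiv.Perm.sumCongrHom] using hc)
      exact Prod.ext hr hpq
    · intro σ
      have hinj : Function.Injective (fun r => σ (I r)) :=
        fun a b hab => hI.injective (σ.injective hab)
      set T : Finset (Fin n) := Finset.univ.image (fun r => σ (I r)) with hT
      have hTcard : T.card = m := by
        rw [hT, Finset.card_image_of_injective _ hinj]; simp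
      set J : Fin m → Fin n := ⇑(T.orderEmbOfFin hTcard) with hJdef
      have hJ : StrictMono J := (T.orderEmbOfFin hTcard).strictMono
      have hrangeJ : Set.range J = ↑T := Finset.range_orderEmbOfFin T hTcard
      set ψ : Equiv.Perm (Fin m ⊕ Fin (n - m)) :=
        eI.trans (σ.trans (eJ ⟨J, hJ⟩).symm) with hψ
      have hmaps : Set.MapsTo ψ (Set.range Sum.inl) (Set.range Sum.inl) := by
        rintro x ⟨r, rfl⟩
        have h1 : σ (I r) ∈ Set.range J := by
          rw [hrangeJ]
          exact Finset.mem_coe.mpr (hT ▸ Finset.mem_image_of_mem _ (Finset.mem_univ r))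
        obtain ⟨s, hs⟩ := h1
        refine ⟨s, ?_⟩
        have : σ (I r) = eJ ⟨J, hJ⟩ (Sum.inl s) := by rw [heJl]; exact hs.symm
        simp [hψ, heIl, this]
      obtain ⟨⟨ρ, τ⟩, hρτ⟩ := Equiv.Perm.mem_sumCongrHom_range_of_perm_mapsTo_inl hmaps
      refine ⟨⟨⟨J, hJ⟩, ρ, τ⟩, ?_⟩
      have hc : Equiv.sumCongr ρ τ = ψ := by simpa [Equiv.Perm.sumCongrHom] using hρτ
      refine Equiv.ext fun i => ?_
      have : Φ (⟨J, hJ⟩, ρ, τ) i = eJ ⟨J, hJ⟩ (ψ (eI.symm i)) := by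
        simp [hΦ, hc]
      rw [this]
      simp [hψ]
  have hterm : ∀ p, (∏ r, M (I r) (p.1.1 (p.2.1 r))) *
      (∏ k, M (delTuple I hI.injective k) (delTuple p.1.1 p.1.2.injective (p.2.2 k))) =
      ∏ i, M i (Φ p i) := by
    intro p
    rw [← Equiv.prod_comp eI (fun i => M i (Φ p i)), Fintype.prod_sum_type]
    congr 1
    · exact Finset.prod_congr rfl fun r _ => by rw [heIl, hΦI]
    · exact Finset.prod_congr rfl fun k _ => by rw [heIr, hΦd]
  calc ∑ σ : Equiv.Perm (Fin n), ∏ i, M i (σ i)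
      = ∑ p : ({J : Fin m → Fin n // StrictMono J} ×
          (Equiv.Perm (Fin m) × Equiv.Perm (Fin (n - m)))), ∏ i, M i (Φ p i) :=
        (Fintype.sum_bijective Φ hbij _ _ (fun p => rfl)).symm
    _ = ∑ J : {J : Fin m → Fin n // StrictMono J},
        (∑ ρ : Equiv.Perm (Fin m), ∏ r, M (I r) (J.1 (ρ r))) *
        (∑ τ : Equiv.Perm (Fin (n - m)),
          ∏ k, M (delTuple I hI.injective k) (delTuple J.1 J.2.injective (τ k))) := by
      rw [Fintype.sum_prod_type]
      refine Finset.sum_congr rfl fun J _ => ?_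
      rw [Fintype.sum_prod_type, Finset.sum_mul_sum]
      exact Finset.sum_congr rfl fun ρ _ => Finset.sum_congr rfl fun τ _ => (hterm (J, (ρ, τ))).symm

lemma sum_emb {n m : ℕ} (f : Set (Fin n) → ℂ) :
    ∑ e : Fin m ↪ Fin n, f (Set.range ⇑e) =
      (m.factorial : ℂ) * ∑ I : {I : Fin m → Fin n // StrictMono I}, f (Set.range I.1) := by
  set Ψ : ({I : Fin m → Fin n // StrictMono I} × Equiv.Perm (Fin m)) → (Fin m ↪ Fin n) :=
    fun p => ⟨p.1.1 ∘ p.2, p.1.2.injective.comp p.2.injective⟩ with hΨ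
  have hbij : Function.Bijective Ψ := by
    constructor
    · rintro p q h
      have hco : ∀ r, p.1.1 (p.2 r) = q.1.1 (q.2 r) := fun r => DFunLike.congr_fun h r
      have hco' : p.1.1 ∘ ⇑p.2 = q.1.1 ∘ ⇑q.2 := funext hco
      have hr : p.1 = q.1 := by
        have h1 : Set.range p.1.1 = Set.range q.1.1 := by
          rw [← Function.Surjective.range_comp p.2.surjective p.1.1,
            ← Function.Surjective.range_comp q.2.surjective q.1.1, hco']
        have hwf : WellFoundedLT (Fin m) := inferInstance
        exact Subtype.ext ((@StrictMono.range_inj (Fin m) (Fin n) _ _ hwf _ _ p.1.2 q.1.2).mp h1)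
      refine Prod.ext hr (Equiv.ext fun r => q.1.2.injective ?_)
      rw [← hco r, hr]
    · intro e
      have hecard : (Finset.univ.image ⇑e).card = m := by
        rw [Finset.card_image_of_injective _ e.injective]; simp
      set I : Fin m → Fin n := ⇑((Finset.univ.image ⇑e).orderEmbOfFin hecard) with hIdef
      have hI : StrictMono I := ((Finset.univ.image ⇑e).orderEmbOfFin hecard).strictMono
      have hmem : ∀ r, e r ∈ Set.range I := by
        intro r
        rw [hIdef, Finset.range_orderEmbOfFin]
        exact Finset.mem_coe.mpr (Finset.mem_image_of_mem _ (Finset.mem_univ r))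
      set π₀ : Fin m → Fin m := fun r => (Equiv.ofInjective I hI.injective).symm ⟨e r, hmem r⟩
        with hπ₀
      have hπinj : Function.Injective π₀ := by
        intro a b hab
        have := congrArg (fun x => ((Equiv.ofInjective I hI.injective) x).1) hab
        simp only [hπ₀, Equiv.apply_symm_apply] at this
        exact e.injective this
      refine ⟨⟨⟨I, hI⟩, Equiv.ofBijective π₀ (Finite.injective_iff_bijective.mp hπinj)⟩, ?_⟩
      refine Function.Embedding.ext fun r => ?_
      show I (π₀ r) = e r
      rw [hπ₀]
      exact congrArg Subtype.val (Equiv.apply_symm_apply (Equiv.ofInjective I hI.injective) _)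
  calc ∑ e : Fin m ↪ Fin n, f (Set.range ⇑e)
      = ∑ p : ({I : Fin m → Fin n // StrictMono I} × Equiv.Perm (Fin m)),
          f (Set.range ⇑(Ψ p)) := (Fintype.sum_bijective Ψ hbij _ _ (fun p => rfl)).symm
    _ = ∑ p : ({I : Fin m → Fin n // StrictMono I} × Equiv.Perm (Fin m)), f (Set.range p.1.1) := by
        refine Finset.sum_congr rfl fun p _ => ?_
        congr 1
        exact Function.Surjective.range_comp p.2.surjective p.1.1
    _ = (m.factorial : ℂ) * ∑ I : {I : Fin m → Fin n // StrictMono I}, f (Set.range I.1) := by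
        rw [Fintype.sum_prod_type, Finset.mul_sum]
        refine Finset.sum_congr rfl fun I _ => ?_
        simp only []
        rw [Finset.sum_const, Finset.card_univ, Fintype.card_perm, nsmul_eq_mul,
          Fintype.card_fin]

open scoped Matrix.Norms.L2Operator

def matEquiv (n : ℕ) : Matrix (Fin n) (Fin n) ℂ ≃L[ℂ] (Fin n → Fin n → ℂ) :=
  LinearEquiv.toContinuousLinearEquiv
    (LinearEquiv.refl ℂ (Matrix (Fin n) (Fin n) ℂ) :
      Matrix (Fin n) (Fin n) ℂ ≃ₗ[ℂ] (Fin n → Fin n → ℂ))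

def permCM (n : ℕ) : ContinuousMultilinearMap ℂ (fun _ : Fin n => (Fin n → ℂ)) ℂ :=
  ∑ σ : Equiv.Perm (Fin n),
    (ContinuousMultilinearMap.mkPiAlgebra ℂ (Fin n) ℂ).compContinuousLinearMap
      (fun i => ContinuousLinearMap.proj (σ i))

lemma permCM_apply (n : ℕ) (v : Fin n → Fin n → ℂ) :
    permCM n v = ∑ σ : Equiv.Perm (Fin n), ∏ i, v i (σ i) := by
  simp [permCM]

lemma perm_eq_comp (n : ℕ) :
    (perm : Matrix (Fin n) (Fin n) ℂ → ℂ) = ⇑(permCM n) ∘ ⇑(matEquiv n) := by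
  funext A
  simp [perm, permCM_apply, matEquiv]
  rfl

lemma step1 {n : ℕ} (m : ℕ) (A X : Matrix (Fin n) (Fin n) ℂ) :
    iteratedFDeriv ℂ m perm A (fun _ => X) =
      ∑ e : Fin m ↪ Fin n, ∑ σ : Equiv.Perm (Fin n),
        ∏ i, (@ite ℂ (i ∈ Set.range ⇑e) (Classical.propDecidable _)
          (X i (σ i)) (A i (σ i))) := by
  have h0 : iteratedFDeriv ℂ m perm A (fun _ => X) =
      (permCM n).iteratedFDeriv m (matEquiv n A) (fun _ => matEquiv n X) := by
    rw [perm_eq_comp, ← (permCM n).iteratedFDeriv_eq,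
      show ⇑(matEquiv n) =
        ⇑((matEquiv n) : Matrix (Fin n) (Fin n) ℂ →L[ℂ] (Fin n → Fin n → ℂ)) from rfl,
      (matEquiv n).toContinuousLinearMap.iteratedFDeriv_comp_right
        ((permCM n).contDiff (n := ⊤)) A (le_top : (m : WithTop ℕ∞) ≤ ⊤)]
    rfl
  rw [h0, ContinuousMultilinearMap.iteratedFDeriv, ContinuousMultilinearMap.sum_apply]
  refine Finset.sum_congr rfl fun e _ => ?_
  rw [ContinuousMultilinearMap.iteratedFDerivComponent_apply, permCM_apply]
  refine Finset.sum_congr rfl fun σ _ => Finset.prod_congr rfl fun i _ => ?_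
  by_cases h : i ∈ Set.range ⇑e
  · simp only [h, dif_pos, if_pos]
    rfl
  · simp only [h, dif_neg, if_neg, not_false_iff, Pi.compRightL_apply]
    rfl

set_option maxHeartbeats 1000000 in
/-- for `1 ≤ m ≤ n`,
`D^m per(A)(X,…,X) = m! Σ_{I,J ∈ Q_{m,n}} per A(I|J) ⬝ per X[I|J]`. -/
theorem iteratedFDeriv_perm_apply_const_eq_sum_laplace (n m : ℕ) (hm : 1 ≤ m) (hmn : m ≤ n)
    (A X : Matrix (Fin n) (Fin n) ℂ) :
    iteratedFDeriv ℂ m perm A (fun _ => X) =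
      (m.factorial : ℂ) * ∑ I : {I : Fin m → Fin n // StrictMono I},
        ∑ J : {J : Fin m → Fin n // StrictMono J},
          perm (A.submatrix (delTuple I.1 I.2.injective) (delTuple J.1 J.2.injective)) *
            perm (X.submatrix I.1 J.1) := by
  rw [step1]
  refine (sum_emb (n := n) (m := m) fun S => ∑ σ : Equiv.Perm (Fin n),
      ∏ i, (@ite ℂ (i ∈ S) (Classical.propDecidable _) (X i (σ i)) (A i (σ i)))).trans ?_
  congr 1
  refine Finset.sum_congr rfl fun I _ => ?_
  have hl := laplace hmn I.1 I.2
    (Matrix.of fun i j => @ite ℂ (i ∈ Set.range I.1) (Classical.propDecidable _) (X i j) (A i j))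
  refine hl.trans ?_
  refine Finset.sum_congr rfl fun J _ => ?_
  rw [mul_comm]
  congr 1
  · simp only [perm, Matrix.submatrix_apply, Matrix.of_apply]
    refine Finset.sum_congr rfl fun τ _ => Finset.prod_congr rfl fun k _ => ?_
    rw [if_neg]
    have h1 : delTuple I.1 I.2.injective k ∈ (Set.range I.1)ᶜ := by
      rw [← range_delTuple I.1 I.2.injective]; exact Set.mem_range_self _
    exact h1
  · simp only [perm, Matrix.submatrix_apply, Matrix.of_apply]
    refine Finset.sum_congr rfl fun ρ _ => Finset.prod_congr rfl fun r _ => ?_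
    rw [if_pos (Set.mem_range_self r)]
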